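/- Let 𝒳 be a d-dimensional trajectory set and (X,n) a node such that there exists h ∈ ℝ^d with h·(X̂_{n+1} − X̂_n) > 0 for all X̂ ∈ 𝒳_{(X,n)}. Then the conditional set 𝒳_{(X,n)} is a null set: Ī_0(1_{𝒳_{(X,n)}}) = 0. -/

import Mathlib

open scoped InnerProductSpace ENNReal
open Finset

namespace Traj

variable {E : Type*} [NormedAddCommGroup E] [InnerProductSpace ℝ E]

/-- A trajectory set: a nonempty set of sequences sharing a common initial value. -/
def IsTrajectorySet (T : Set (ℕ → E)) (x0 : E) : Prop :=
  T.Nonempty ∧ ∀ X ∈ T, X 0 = x0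

/-- The conditional trajectory set at the node `(X, k)`. -/
def condSet (T : Set (ℕ → E)) (X : ℕ → E) (k : ℕ) : Set (ℕ → E) :=
  {Y | Y ∈ T ∧ ∀ i ≤ k, Y i = X i}

/-- Non-anticipativity of a family `(G i)_{i ≥ j}` of functions on the conditional set. -/
def NonAnticipative (T : Set (ℕ → E)) (X : ℕ → E) (j : ℕ)
    {F : Type*} (G : ℕ → (ℕ → E) → F) : Prop :=
  ∀ i, j ≤ i → ∀ Y ∈ condSet T X j, ∀ Z ∈ condSet T X j,
    (∀ k, j ≤ k → k ≤ i → Y k = Z k) → G i Y = G i Z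

/-- The simple portfolio payoff `Π^{V,H}_{j,n}`. -/
noncomputable def piPort (H : ℕ → (ℕ → E) → E) (j n : ℕ) (V : ℝ) (Y : ℕ → E) : ℝ :=
  V + ∑ i ∈ Finset.Ico j n, ⟪H i Y, Y (i + 1) - Y i⟫_ℝ

/-- The total initial cost `Σ_{m ≥ 0} V^m` of a generalized portfolio (`V^m ≥ 0` for `m ≥ 1`). -/
noncomputable def SuperhedgeCost (V : ℕ → ℝ) : EReal :=
  (V 0 : EReal) + ((∑' m : ℕ, ENNReal.ofReal (V (m + 1)) : ℝ≥0∞) : EReal)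

/-- `(V, H, n)` is a generalized superhedge of `f` at node `(X, j)`: `f_0 = Π^{V⁰,H⁰}_{j,n₀}`
and, for `m ≥ 1`, `f_m = Π^{Vᵐ,Hᵐ}_{j,n_m}` with `Π^{Vᵐ,Hᵐ}_{j,n} ≥ 0` for all `n ≥ j`,
and `f ≤ Σ_{m ≥ 0} f_m` on the conditional set. -/
def IsSuperhedge (T : Set (ℕ → E)) (X : ℕ → E) (j : ℕ) (f : (ℕ → E) → EReal)
    (V : ℕ → ℝ) (H : ℕ → ℕ → (ℕ → E) → E) (n : ℕ → ℕ) : Prop :=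
  (∀ m, NonAnticipative T X j (H m)) ∧ (∀ m, j ≤ n m) ∧
  (∀ m, 1 ≤ m → ∀ k, j ≤ k → ∀ Y ∈ condSet T X j, 0 ≤ piPort (H m) j k (V m) Y) ∧
  (∀ Y ∈ condSet T X j,
    f Y ≤ (piPort (H 0) j (n 0) (V 0) Y : EReal)
      + ((∑' m : ℕ, ENNReal.ofReal (piPort (H (m + 1)) j (n (m + 1)) (V (m + 1)) Y) :
          ℝ≥0∞) : EReal))

/-- The conditional superhedging operator `σ̄_j f (X)`. -/
noncomputable def sigmaUp (T : Set (ℕ → E)) (X : ℕ → E) (j : ℕ)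
    (f : (ℕ → E) → EReal) : EReal :=
  sInf {c : EReal | ∃ V H n, IsSuperhedge T X j f V H n ∧ c = SuperhedgeCost V}

/-- The conditional underhedging operator `σ̲_j f = -σ̄_j (-f)`. -/
noncomputable def sigmaDown (T : Set (ℕ → E)) (X : ℕ → E) (j : ℕ)
    (f : (ℕ → E) → EReal) : EReal :=
  - sigmaUp T X j (fun Y => - f Y)

/-- Hedge data for the conditional norm operator: all portfolios are nonnegative. -/
def IsNormHedge (T : Set (ℕ → E)) (X : ℕ → E) (j : ℕ) (f : (ℕ → E) → ℝ≥0∞)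
    (V : ℕ → ℝ) (H : ℕ → ℕ → (ℕ → E) → E) (n : ℕ → ℕ) : Prop :=
  (∀ m, NonAnticipative T X j (H m)) ∧ (∀ m, j ≤ n m) ∧
  (∀ m, ∀ k, j ≤ k → ∀ Y ∈ condSet T X j, 0 ≤ piPort (H m) j k (V m) Y) ∧
  (∀ Y ∈ condSet T X j,
    f Y ≤ ∑' m : ℕ, ENNReal.ofReal (piPort (H m) j (n m) (V m) Y))

/-- The conditional norm operator `Ī_j f (X)` (for nonnegative extended-real `f`). -/
noncomputable def Ibar (T : Set (ℕ → E)) (X : ℕ → E) (j : ℕ)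
    (f : (ℕ → E) → ℝ≥0∞) : ℝ≥0∞ :=
  sInf {c : ℝ≥0∞ | ∃ V H n, IsNormHedge T X j f V H n ∧
    c = ∑' m : ℕ, ENNReal.ofReal (V m)}

/-- `A` is conditionally null at the node `(X, j)`. -/
def NullAt (T : Set (ℕ → E)) (X : ℕ → E) (j : ℕ) (A : Set (ℕ → E)) : Prop :=
  Ibar T X j (A.indicator fun _ => (1 : ℝ≥0∞)) = 0

/-- `A` is a (global) null set. -/
def IsNull (T : Set (ℕ → E)) (A : Set (ℕ → E)) : Prop :=
  ∀ X ∈ T, NullAt T X 0 A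

/-- Property `(L_{(X,j)})`. -/
def PropertyL (T : Set (ℕ → E)) (X : ℕ → E) (j : ℕ) : Prop :=
  ∀ V H n, IsSuperhedge T X j (fun _ => (0 : EReal)) V H n →
    (0 : EReal) ≤ SuperhedgeCost V

/-- `(X, k)` is an arbitrage-free node. -/
def ArbitrageFreeNode (T : Set (ℕ → E)) (X : ℕ → E) (k : ℕ) : Prop :=
  ∀ h : E, (∀ Y ∈ condSet T X k, ⟪h, Y (k + 1) - Y k⟫_ℝ = 0) ∨
    (⨅ Y ∈ condSet T X k, ((⟪h, Y (k + 1) - Y k⟫_ℝ : ℝ) : EReal)) < 0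

/-- The set `𝒩` of trajectories passing (non-constantly) through an arbitrage node. -/
def arbNull (T : Set (ℕ → E)) : Set (ℕ → E) :=
  {X | X ∈ T ∧ ∃ j : ℕ, ¬ ArbitrageFreeNode T X j ∧ X (j + 1) ≠ X j}

/-- Property `(L)`-a.e. -/
def LaeHolds (T : Set (ℕ → E)) : Prop :=
  (∀ X ∈ T \ arbNull T, ∀ k, 1 ≤ k → PropertyL T X k) ∧
  (∀ X ∈ T, PropertyL T X 0)

/-- A bounded non-anticipative stopping rule. -/
def BoundedStoppingRule (T : Set (ℕ → E)) (N : (ℕ → E) → ℕ) : Prop :=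
  (∃ nstar, ∀ X ∈ T, N X ≤ nstar) ∧
  (∀ k : ℕ, ∀ X ∈ T, ∀ Y ∈ T, (∀ i ≤ k, X i = Y i) → (N X ≤ k ↔ N Y ≤ k))

end Traj

namespace Traj

open Classical in
/-- Auxiliary hedge: buy `h` at time `n` if the path agrees with `X` up to time `n`. -/
noncomputable def gainH {E : Type*} [NormedAddCommGroup E] [InnerProductSpace ℝ E]
    (X : ℕ → E) (n : ℕ) (h : E) (i : ℕ) (Y : ℕ → E) : E :=
  if i = n ∧ (∀ j ≤ n, Y j = X j) then h else 0

open Classical in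
lemma piPort_gainH {E : Type*} [NormedAddCommGroup E] [InnerProductSpace ℝ E]
    (X : ℕ → E) (n : ℕ) (h : E) (k : ℕ) (Y : ℕ → E) :
    piPort (gainH X n h) 0 k 0 Y
      = if n < k ∧ (∀ j ≤ n, Y j = X j) then ⟪h, Y (n + 1) - Y n⟫_ℝ else 0 := by
  unfold piPort gainH
  rw [zero_add]
  by_cases hag : ∀ j ≤ n, Y j = X j
  · have : ∀ i ∈ Finset.Ico 0 k,
        ⟪(if i = n ∧ (∀ j ≤ n, Y j = X j) then h else 0), Y (i + 1) - Y i⟫_ℝ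
          = if i = n then ⟪h, Y (n + 1) - Y n⟫_ℝ else 0 := by
      intro i _
      by_cases hi : i = n
      · subst hi; rw [if_pos ⟨rfl, hag⟩, if_pos rfl]
      · rw [if_neg (fun hc => hi hc.1), if_neg hi, inner_zero_left]
    rw [Finset.sum_congr rfl this, Finset.sum_ite_eq' (Finset.Ico 0 k) n]
    have hc : (n ∈ Finset.Ico 0 k) ↔ (n < k ∧ ∀ j ≤ n, Y j = X j) := by
      rw [Finset.mem_Ico]
      exact ⟨fun hnk => ⟨hnk.2, hag⟩, fun hc => ⟨Nat.zero_le _, hc.1⟩⟩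
    exact if_congr hc rfl rfl
  · have : ∀ i ∈ Finset.Ico 0 k,
        ⟪(if i = n ∧ (∀ j ≤ n, Y j = X j) then h else 0), Y (i + 1) - Y i⟫_ℝ = 0 := by
      intro i _
      rw [if_neg (fun hc => hag hc.2), inner_zero_left]
    rw [Finset.sum_congr rfl this, Finset.sum_const, smul_zero,
      if_neg (fun hc => hag hc.2)]

/-- if at node `(X,n)` some vector `h` yields a strictly positive gain against all
futures, then the conditional set `𝒳_{(X,n)}` is a null set. -/
theorem condSet_null_of_strict_gain
    (d : ℕ) (T : Set (ℕ → EuclideanSpace ℝ (Fin d))) (x0 : EuclideanSpace ℝ (Fin d))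
    (hT : IsTrajectorySet T x0)
    (X : ℕ → EuclideanSpace ℝ (Fin d)) (hX : X ∈ T) (n : ℕ)
    (harb : ∃ h : EuclideanSpace ℝ (Fin d),
      ∀ Y ∈ condSet T X n, 0 < ⟪h, Y (n + 1) - Y n⟫_ℝ) :
    IsNull T (condSet T X n) := by
  classical
  obtain ⟨h, hh⟩ := harb
  intro X' hX'
  unfold NullAt Ibar
  refine le_antisymm (sInf_le ?_) zero_le
  refine ⟨fun _ => 0, fun _ => gainH X n h, fun _ => n + 1, ⟨?_, ?_, ?_, ?_⟩, by simp⟩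
  · -- non-anticipativity
    intro m i hi Y hY Z hZ hagree
    simp only [gainH]
    by_cases hin : i = n
    · subst hin
      have hYZ : (∀ j ≤ i, Y j = X j) ↔ (∀ j ≤ i, Z j = X j) := by
        constructor <;> intro hag j hj
        · rw [← hagree j (Nat.zero_le _) hj]; exact hag j hj
        · rw [hagree j (Nat.zero_le _) hj]; exact hag j hj
      by_cases hag : ∀ j ≤ i, Y j = X j
      · rw [if_pos ⟨rfl, hag⟩, if_pos ⟨rfl, hYZ.1 hag⟩]
      · rw [if_neg (fun hc => hag hc.2), if_neg (fun hc => hag (hYZ.2 hc.2))]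
    · rw [if_neg (fun hc => hin hc.1), if_neg (fun hc => hin hc.1)]
  · exact fun m => Nat.zero_le _
  · -- nonnegativity of all partial payoffs
    intro m k _ Y hY
    rw [piPort_gainH]
    by_cases hc : n < k ∧ (∀ j ≤ n, Y j = X j)
    · rw [if_pos hc]
      exact le_of_lt (hh Y ⟨hY.1, hc.2⟩)
    · rw [if_neg hc]
  · -- superhedging of the indicator
    intro Y hY
    by_cases hYc : Y ∈ condSet T X n
    · have hpos : 0 < ⟪h, Y (n + 1) - Y n⟫_ℝ := hh Y hYc
      have hval : ∀ m : ℕ, piPort (gainH X n h) 0 (n + 1) 0 Y = ⟪h, Y (n + 1) - Y n⟫_ℝ := by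
        intro m
        rw [piPort_gainH, if_pos ⟨Nat.lt_succ_self n, hYc.2⟩]
      calc Set.indicator (condSet T X n) (fun _ => (1 : ℝ≥0∞)) Y
          ≤ ⊤ := le_top
        _ = ∑' m : ℕ, ENNReal.ofReal (piPort (gainH X n h) 0 (n + 1) 0 Y) := by
            rw [ENNReal.tsum_const_eq_top_of_ne_zero]
            rw [hval 0]
            simpa using ENNReal.ofReal_pos.2 hpos |>.ne'
        _ = _ := rfl
    · rw [Set.indicator_of_notMem hYc]
      exact zero_le

end Traj
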